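/- Given two n-ary multiplicative Hom-Nambu-Lie superalgebras (g₁, [·,...,·]₁, α) and (g₂, [·,...,·]₂, β), the direct sum g₁ ⊕ g₂ with the componentwise bracket [u₁+v₁,...,uₙ+vₙ] := [u₁,...,uₙ]₁ + [v₁,...,vₙ]₂ and twist map (α+β)(u+v) := α(u)+β(v) is an n-ary multiplicative Hom-Nambu-Lie superalgebra. -/

import Mathlib

open Finset

/-- An `(m+1)`-ary multiplicative Hom-Nambu-Lie superalgebra structure on a `K`-vector space
`V` with `ℤ/2`-grading `gr`, `(m+1)`-linear bracket `br` and twist map `α`. -/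
structure IsHNLS (K : Type*) {V : Type*} [Field K] [AddCommGroup V] [Module K V]
    (m : ℕ) (gr : ZMod 2 → Submodule K V)
    (br : MultilinearMap K (fun _ : Fin (m + 1) => V) V)
    (α : V →ₗ[K] V) : Prop where
  even_alpha : ∀ (d : ZMod 2), ∀ v ∈ gr d, α v ∈ gr d
  even_br : ∀ (d : Fin (m + 1) → ZMod 2) (x : Fin (m + 1) → V),
      (∀ i, x i ∈ gr (d i)) → br x ∈ gr (∑ i, d i)
  skew : ∀ (d : Fin (m + 1) → ZMod 2) (x : Fin (m + 1) → V),
      (∀ i, x i ∈ gr (d i)) → ∀ i j : Fin (m + 1), (i : ℕ) + 1 = (j : ℕ) →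
      br x = -((-1 : K) ^ (d i * d j).val) • br (x ∘ Equiv.swap i j)
  mult : ∀ x : Fin (m + 1) → V, α (br x) = br fun i => α (x i)
  jacobi : ∀ (dx : Fin m → ZMod 2) (dy : Fin (m + 1) → ZMod 2)
      (x : Fin m → V) (y : Fin (m + 1) → V),
      (∀ i, x i ∈ gr (dx i)) → (∀ i, y i ∈ gr (dy i)) →
      br (Fin.snoc (fun i => α (x i)) (br y)) =
        ∑ i : Fin (m + 1),
          ((-1 : K) ^ (((∑ j, dx j) * ∑ j ∈ univ.filter (fun j => j < i), dy j).val)) •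
            br (Function.update (fun j => α (y j)) i (br (Fin.snoc x (y i))))

/-- Proposition 1.8: the direct sum of two n-ary multiplicative Hom-Nambu-Lie superalgebras,
with componentwise bracket and twist, is again one. -/
theorem direct_sum_HNLS {K V₁ V₂ : Type*} [Field K]
    [AddCommGroup V₁] [Module K V₁] [AddCommGroup V₂] [Module K V₂] (m : ℕ)
    (gr₁ : ZMod 2 → Submodule K V₁) (gr₂ : ZMod 2 → Submodule K V₂)
    (br₁ : MultilinearMap K (fun _ : Fin (m + 1) => V₁) V₁)
    (br₂ : MultilinearMap K (fun _ : Fin (m + 1) => V₂) V₂)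
    (α : V₁ →ₗ[K] V₁) (β : V₂ →ₗ[K] V₂)
    (h₁ : IsHNLS K m gr₁ br₁ α) (h₂ : IsHNLS K m gr₂ br₂ β) :
    IsHNLS K m (fun d => (gr₁ d).prod (gr₂ d))
      ((br₁.compLinearMap fun _ => LinearMap.fst K V₁ V₂).prod
        (br₂.compLinearMap fun _ => LinearMap.snd K V₁ V₂))
      (α.prodMap β) := by
  constructor
  · intro d v hv
    exact ⟨h₁.even_alpha d v.1 hv.1, h₂.even_alpha d v.2 hv.2⟩
  · intro d x hx
    exact ⟨h₁.even_br d _ (fun i => (hx i).1), h₂.even_br d _ (fun i => (hx i).2)⟩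
  · intro d x hx i j hij
    have e1 := h₁.skew d (fun i => (x i).1) (fun i => (hx i).1) i j hij
    have e2 := h₂.skew d (fun i => (x i).2) (fun i => (hx i).2) i j hij
    simp only [MultilinearMap.prod_apply, MultilinearMap.compLinearMap_apply,
      LinearMap.fst_apply, LinearMap.snd_apply, Function.comp]
    exact Prod.ext (by simpa [Function.comp_def] using e1) (by simpa [Function.comp_def] using e2)
  · intro x
    simp only [MultilinearMap.prod_apply, MultilinearMap.compLinearMap_apply,
      LinearMap.fst_apply, LinearMap.snd_apply, LinearMap.prodMap_apply]
    exact Prod.ext (by simpa using h₁.mult (fun i => (x i).1))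
      (by simpa using h₂.mult (fun i => (x i).2))
  · intro dx dy x y hx hy
    have e1 := h₁.jacobi dx dy (fun i => (x i).1) (fun i => (y i).1)
      (fun i => (hx i).1) (fun i => (hy i).1)
    have e2 := h₂.jacobi dx dy (fun i => (x i).2) (fun i => (y i).2)
      (fun i => (hx i).2) (fun i => (hy i).2)
    simp only [MultilinearMap.prod_apply, MultilinearMap.compLinearMap_apply,
      LinearMap.fst_apply, LinearMap.snd_apply, LinearMap.prodMap_apply]
    refine Prod.ext ?_ ?_
    · rw [Prod.fst_sum]
      simp only [Prod.smul_fst, MultilinearMap.prod_apply, MultilinearMap.compLinearMap_apply,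
        LinearMap.fst_apply]
      have hL : (fun i => ((Fin.snoc (fun i => ((α (x i).1, β (x i).2) : V₁ × V₂))
          (((br₁ fun i => (y i).1, br₂ fun i => (y i).2)) : V₁ × V₂) : Fin (m+1) → V₁ × V₂) i).1)
          = Fin.snoc (fun i => α ((x i).1)) (br₁ fun i => (y i).1) := by
        funext i
        refine Fin.lastCases ?_ (fun j => ?_) i <;> simp
      rw [hL, e1]
      refine Finset.sum_congr rfl fun i _ => ?_
      congr 1
      congr 1
      funext j
      rcases eq_or_ne j i with rfl | h
      · simp only [Function.update_self]
        congr 1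
        funext k
        refine Fin.lastCases ?_ (fun l => ?_) k <;> simp
      · simp [Function.update_of_ne h]
    · rw [Prod.snd_sum]
      simp only [Prod.smul_snd, MultilinearMap.prod_apply, MultilinearMap.compLinearMap_apply,
        LinearMap.snd_apply]
      have hL : (fun i => ((Fin.snoc (fun i => ((α (x i).1, β (x i).2) : V₁ × V₂))
          (((br₁ fun i => (y i).1, br₂ fun i => (y i).2)) : V₁ × V₂) : Fin (m+1) → V₁ × V₂) i).2)
          = Fin.snoc (fun i => β ((x i).2)) (br₂ fun i => (y i).2) := by
        funext i
        refine Fin.lastCases ?_ (fun j => ?_) i <;> simp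
      rw [hL, e2]
      refine Finset.sum_congr rfl fun i _ => ?_
      congr 1
      congr 1
      funext j
      rcases eq_or_ne j i with rfl | h
      · simp only [Function.update_self]
        congr 1
        funext k
        refine Fin.lastCases ?_ (fun l => ?_) k <;> simp
      · simp [Function.update_of_ne h]
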